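/- arXiv:2011.05430 — 5 statements merged into one kernel-verified Lean document; each statement's English description precedes it below -/
import Mathlib

section
/- Let R > 0 and let v : ℝ → ℝ be continuously differentiable with v'(u) ≤ 0 for all u ∈ [0,R]. Let ε > 0 and let q : ℝ → ℝ be twice continuously differentiable with values in [0,R], and set ρ(x) = q(x) − ε q'(x); assume ρ also takes values in [0,R]. Then for every nonnegative φ ∈ C_c^1(ℝ): 2 ∫ ρ(x) · d/dx [ ρ(x) ( v(ρ(x)) − v(q(x)) ) ] · φ(x) dx ≤ − ∫ ρ(x)² ( v(ρ(x)) − v(q(x)) ) φ'(x) dx − ∫ ( W(ρ(x)) − W(q(x)) ) φ'(x) dx. -/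
open MeasureTheory Set

/-- Key integral estimate: with `ρ = q - ε q'` and `v' ≤ 0` on `[0,R]`, for every
nonnegative `φ ∈ C_c¹(ℝ)`,
`2 ∫ ρ (ρ (v(ρ) - v(q)))' φ ≤ - ∫ ρ² (v(ρ) - v(q)) φ' - ∫ (W(ρ) - W(q)) φ'`,
where `W(u) = ∫_0^u s² v'(s) ds`. -/
theorem key_integral_estimate
    (R : ℝ) (hR : 0 < R)
    (v : ℝ → ℝ) (hv : ContDiff ℝ 1 v)
    (hv' : ∀ u ∈ Icc (0:ℝ) R, deriv v u ≤ 0)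
    (ε : ℝ) (hε : 0 < ε)
    (q : ℝ → ℝ) (hq : ContDiff ℝ 2 q) (hqr : ∀ x, q x ∈ Icc (0:ℝ) R)
    (ρ : ℝ → ℝ) (hρ : ∀ x, ρ x = q x - ε * deriv q x)
    (hρr : ∀ x, ρ x ∈ Icc (0:ℝ) R)
    (φ : ℝ → ℝ) (hφ : ContDiff ℝ 1 φ) (hφs : HasCompactSupport φ)
    (hφ0 : ∀ x, 0 ≤ φ x) :
    2 * ∫ x : ℝ, ρ x * deriv (fun z => ρ z * (v (ρ z) - v (q z))) x * φ x
      ≤ - (∫ x : ℝ, (ρ x) ^ 2 * (v (ρ x) - v (q x)) * deriv φ x)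
        - ∫ x : ℝ, ((∫ s in (0:ℝ)..(ρ x), s ^ 2 * deriv v s)
            - ∫ s in (0:ℝ)..(q x), s ^ 2 * deriv v s) * deriv φ x := by
  -- Basic regularity facts
  have hρfun : ρ = fun x => q x - ε * deriv q x := funext hρ
  have hq1 : ContDiff ℝ 1 (deriv q) := by
    have h2 : (2 : WithTop ℕ∞) = 1 + 1 := by norm_num
    rw [h2] at hq
    exact (contDiff_succ_iff_deriv.mp hq).2.2
  have hqC1 : ContDiff ℝ 1 q := hq.of_le (by norm_num)
  have hρ1 : ContDiff ℝ 1 ρ := by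
    rw [hρfun]; exact hqC1.sub (contDiff_const.mul hq1)
  have hqc : Continuous q := hqC1.continuous
  have hρc : Continuous ρ := hρ1.continuous
  have hq'c : Continuous (deriv q) := hq1.continuous
  have hρ'c : Continuous (deriv ρ) := hρ1.continuous_deriv le_rfl
  have hv'c : Continuous (deriv v) := hv.continuous_deriv le_rfl
  have hφc : Continuous φ := hφ.continuous
  have hφ'c : Continuous (deriv φ) := hφ.continuous_deriv le_rfl
  have hφ's : HasCompactSupport (deriv φ) := hφs.deriv
  -- pointwise derivatives
  have hqd : ∀ x, HasDerivAt q (deriv q x) x :=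
    fun x => (hqC1.differentiable one_ne_zero x).hasDerivAt
  have hρd : ∀ x, HasDerivAt ρ (deriv ρ x) x :=
    fun x => (hρ1.differentiable one_ne_zero x).hasDerivAt
  have hvd : ∀ y, HasDerivAt v (deriv v y) y :=
    fun y => (hv.differentiable one_ne_zero y).hasDerivAt
  have hfc : Continuous fun s : ℝ => s ^ 2 * deriv v s :=
    (continuous_pow 2).mul hv'c
  have hWd : ∀ u : ℝ, HasDerivAt (fun u => ∫ s in (0:ℝ)..u, s ^ 2 * deriv v s)
      (u ^ 2 * deriv v u) u := fun u =>
    intervalIntegral.integral_hasDerivAt_right (hfc.intervalIntegrable _ _)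
      (hfc.stronglyMeasurableAtFilter _ _) hfc.continuousAt
  have hWc : Continuous fun u : ℝ => ∫ s in (0:ℝ)..u, s ^ 2 * deriv v s :=
    continuous_iff_continuousAt.mpr fun u => (hWd u).continuousAt
  -- derivative of g = ρ (v∘ρ - v∘q)
  have hgd : ∀ x, HasDerivAt (fun z => ρ z * (v (ρ z) - v (q z)))
      (deriv ρ x * (v (ρ x) - v (q x)) +
        ρ x * (deriv v (ρ x) * deriv ρ x - deriv v (q x) * deriv q x)) x := fun x =>
    (hρd x).mul (((hvd (ρ x)).comp x (hρd x)).sub ((hvd (q x)).comp x (hqd x)))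
  -- F and its derivative F'
  set F : ℝ → ℝ := fun x => ρ x ^ 2 * (v (ρ x) - v (q x)) +
      ((∫ s in (0:ℝ)..(ρ x), s ^ 2 * deriv v s) - ∫ s in (0:ℝ)..(q x), s ^ 2 * deriv v s)
    with hF
  set F' : ℝ → ℝ := fun x =>
      2 * ρ x * deriv ρ x * (v (ρ x) - v (q x)) +
      ρ x ^ 2 * (deriv v (ρ x) * deriv ρ x - deriv v (q x) * deriv q x) +
      (ρ x ^ 2 * deriv v (ρ x) * deriv ρ x - q x ^ 2 * deriv v (q x) * deriv q x)
    with hF'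
  have hFd : ∀ x, HasDerivAt F (F' x) x := by
    intro x
    have h1 := ((hρd x).pow 2).mul
      (((hvd (ρ x)).comp x (hρd x)).sub ((hvd (q x)).comp x (hqd x)))
    have h2 := ((hWd (ρ x)).comp x (hρd x)).sub ((hWd (q x)).comp x (hqd x))
    have h3 := h1.add h2
    refine h3.congr_deriv ?_
    simp only [hF', Function.comp_apply, Pi.sub_apply, Pi.pow_apply]
    push_cast
    ring
  have hFc : Continuous F := by
    apply Continuous.add
    · exact ((hρc.pow 2).mul (((hv.continuous).comp hρc).sub ((hv.continuous).comp hqc)))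
    · exact (hWc.comp hρc).sub (hWc.comp hqc)
  have hF'c : Continuous F' := by
    refine Continuous.add (Continuous.add ?_ ?_) ?_
    · exact ((continuous_const.mul hρc).mul hρ'c).mul
        (((hv.continuous).comp hρc).sub ((hv.continuous).comp hqc))
    · exact (hρc.pow 2).mul (((hv'c.comp hρc).mul hρ'c).sub ((hv'c.comp hqc).mul hq'c))
    · exact (((hρc.pow 2).mul (hv'c.comp hρc)).mul hρ'c).sub
        (((hqc.pow 2).mul (hv'c.comp hqc)).mul hq'c)
  -- integrability helper
  have intg : ∀ h g : ℝ → ℝ, Continuous h → Continuous g → HasCompactSupport g →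
      Integrable (fun x => h x * g x) := fun h g hh hg hgs =>
    (hh.mul hg).integrable_of_hasCompactSupport hgs.mul_left
  -- the error term
  set E : ℝ → ℝ := fun x => (q x ^ 2 - ρ x ^ 2) * deriv v (q x) * deriv q x * φ x with hE
  have hEc : Continuous fun x => (q x ^ 2 - ρ x ^ 2) * deriv v (q x) * deriv q x :=
    (((hqc.pow 2).sub (hρc.pow 2)).mul (hv'c.comp hqc)).mul hq'c
  have hEint : Integrable E := intg _ _ hEc hφc hφs
  have hEneg : ∀ x, E x ≤ 0 := by
    intro x
    have hq'x : deriv q x = (q x - ρ x) / ε := by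
      have := hρ x; field_simp; linarith
    have hEeq : E x = deriv v (q x) * ((q x + ρ x) * (q x - ρ x) ^ 2 * φ x / ε) := by
      rw [hE]; simp only; rw [hq'x]; field_simp; ring
    rw [hEeq]
    apply mul_nonpos_of_nonpos_of_nonneg
    · exact hv' (q x) (hqr x)
    · apply div_nonneg _ hε.le
      apply mul_nonneg _ (hφ0 x)
      apply mul_nonneg _ (sq_nonneg _)
      have h1 := (hqr x).1; have h2 := (hρr x).1; linarith
  -- integrability of the various pieces
  have hI2 : Integrable (fun x => F' x * φ x) := intg _ _ hF'c hφc hφs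
  have hI4 : Integrable (fun x => F x * deriv φ x) := intg _ _ hFc hφ'c hφ's
  have hI4' : Integrable (fun x => F x * φ x) := intg _ _ hFc hφc hφs
  have hI5 : Integrable (fun x => ρ x ^ 2 * (v (ρ x) - v (q x)) * deriv φ x) :=
    intg _ _ ((hρc.pow 2).mul (((hv.continuous).comp hρc).sub ((hv.continuous).comp hqc)))
      hφ'c hφ's
  have hI6 : Integrable (fun x =>
      ((∫ s in (0:ℝ)..(ρ x), s ^ 2 * deriv v s) -
        ∫ s in (0:ℝ)..(q x), s ^ 2 * deriv v s) * deriv φ x) :=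
    intg _ _ ((hWc.comp hρc).sub (hWc.comp hqc)) hφ'c hφ's
  -- integration by parts : ∫ F φ' = - ∫ F' φ
  have hIBP : (∫ x : ℝ, F x * deriv φ x) = - ∫ x : ℝ, F' x * φ x := by
    exact MeasureTheory.integral_mul_deriv_eq_deriv_mul_of_integrable (fun x _ => hFd x)
      (fun x _ => (hφ.differentiable one_ne_zero x).hasDerivAt) hI4 hI2 hI4'
  -- main pointwise identity and chain of equalities
  have hmain : 2 * ∫ x : ℝ, ρ x * deriv (fun z => ρ z * (v (ρ z) - v (q z))) x * φ x
      = (∫ x : ℝ, F' x * φ x) + ∫ x : ℝ, E x := by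
    rw [← integral_const_mul, ← integral_add hI2 hEint]
    apply integral_congr_ae
    filter_upwards with x
    rw [(hgd x).deriv, hF', hE]
    simp only
    ring
  have hsplit : (∫ x : ℝ, F x * deriv φ x)
      = (∫ x : ℝ, ρ x ^ 2 * (v (ρ x) - v (q x)) * deriv φ x)
        + ∫ x : ℝ, ((∫ s in (0:ℝ)..(ρ x), s ^ 2 * deriv v s)
            - ∫ s in (0:ℝ)..(q x), s ^ 2 * deriv v s) * deriv φ x := by
    rw [← integral_add hI5 hI6]
    apply integral_congr_ae
    filter_upwards with x
    rw [hF]; ring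
  have hEle : (∫ x : ℝ, E x) ≤ 0 := integral_nonpos hEneg
  have hF'φ : (∫ x : ℝ, F' x * φ x) = - ∫ x : ℝ, F x * deriv φ x := by linarith [hIBP]
  rw [hmain, hF'φ, hsplit]
  linarith
end

section
/- Let v : ℝ → ℝ be continuously differentiable, and let ρ, q : Ω → ℝ be continuously differentiable functions on an open set Ω ⊆ ℝ² (with coordinates (t,x)) such that ∂_t ρ + ∂_x ( ρ · v(q) ) = 0 on Ω. Then at every point of Ω: ∂_t ( ρ²/2 ) + ∂_x ( ψ(ρ) ) = ρ · ∂_x [ ρ ( v(ρ) − v(q) ) ], where ψ(u) = ∫_0^u ( s v(s) + s² v'(s) ) ds. -/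
open Set

/-- Entropy production identity: if `ρ_t + (ρ v(q))_x = 0` on an open set `Ω`, then
`(ρ²/2)_t + ψ(ρ)_x = ρ ⬝ (ρ (v(ρ) - v(q)))_x` on `Ω`, where
`ψ(u) = ∫_0^u (s v(s) + s² v'(s)) ds`. -/
theorem entropy_production_identity
    (v : ℝ → ℝ) (hv : ContDiff ℝ 1 v)
    (Ω : Set (ℝ × ℝ)) (hΩ : IsOpen Ω)
    (ρ q : ℝ → ℝ → ℝ)
    (hρ : ContDiffOn ℝ 1 (fun p : ℝ × ℝ => ρ p.1 p.2) Ω)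
    (hq : ContDiffOn ℝ 1 (fun p : ℝ × ℝ => q p.1 p.2) Ω)
    (hpde : ∀ p ∈ Ω,
      deriv (fun t => ρ t p.2) p.1 + deriv (fun x => ρ p.1 x * v (q p.1 x)) p.2 = 0) :
    ∀ p ∈ Ω,
      deriv (fun t => (ρ t p.2) ^ 2 / 2) p.1
        + deriv (fun x => ∫ s in (0:ℝ)..(ρ p.1 x), (s * v s + s ^ 2 * deriv v s)) p.2
      = ρ p.1 p.2 * deriv (fun x => ρ p.1 x * (v (ρ p.1 x) - v (q p.1 x))) p.2 := by
  intro p hp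
  obtain ⟨t0, x0⟩ := p
  simp only at *
  -- differentiability of ρ, q at the point in each variable
  have hρat : ContDiffAt ℝ 1 (fun p : ℝ × ℝ => ρ p.1 p.2) (t0, x0) :=
    hρ.contDiffAt (hΩ.mem_nhds hp)
  have hqat : ContDiffAt ℝ 1 (fun p : ℝ × ℝ => q p.1 p.2) (t0, x0) :=
    hq.contDiffAt (hΩ.mem_nhds hp)
  have hρd := hρat.differentiableAt one_ne_zero
  have hqd := hqat.differentiableAt one_ne_zero
  have hx : DifferentiableAt ℝ (fun x : ℝ => ((t0, x) : ℝ × ℝ)) x0 :=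
    (differentiableAt_const _).prodMk differentiableAt_id
  have ht : DifferentiableAt ℝ (fun t : ℝ => ((t, x0) : ℝ × ℝ)) t0 :=
    differentiableAt_id.prodMk (differentiableAt_const _)
  have dρx : DifferentiableAt ℝ (fun x => ρ t0 x) x0 := hρd.comp x0 hx
  have dρt : DifferentiableAt ℝ (fun t => ρ t x0) t0 := by have := hρd.comp t0 ht; exact this
  have dqx : DifferentiableAt ℝ (fun x => q t0 x) x0 := hqd.comp x0 hx
  set A := deriv (fun t => ρ t x0) t0 with hAdef
  set B := deriv (fun x => ρ t0 x) x0 with hBdef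
  set C := deriv (fun x => q t0 x) x0 with hCdef
  have hA : HasDerivAt (fun t => ρ t x0) A t0 := dρt.hasDerivAt
  have hB : HasDerivAt (fun x => ρ t0 x) B x0 := dρx.hasDerivAt
  have hC : HasDerivAt (fun x => q t0 x) C x0 := dqx.hasDerivAt
  set r := ρ t0 x0 with hrdef
  set w := q t0 x0 with hwdef
  have hvdiff : Differentiable ℝ v := hv.differentiable one_ne_zero
  have hvcont : Continuous (deriv v) := hv.continuous_deriv le_rfl
  have hvρ : HasDerivAt v (deriv v r) r := (hvdiff r).hasDerivAt
  have hvw : HasDerivAt v (deriv v w) w := (hvdiff w).hasDerivAt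
  -- the integrand is continuous
  have hfcont : Continuous (fun s : ℝ => s * v s + s ^ 2 * deriv v s) := by
    fun_prop
  -- FTC: derivative of the primitive
  have hF : HasDerivAt (fun y : ℝ => ∫ s in (0:ℝ)..y, (s * v s + s ^ 2 * deriv v s))
      (r * v r + r ^ 2 * deriv v r) r := by
    exact intervalIntegral.integral_hasDerivAt_right
      (hfcont.intervalIntegrable _ _)
      (hfcont.stronglyMeasurableAtFilter _ _)
      hfcont.continuousAt
  have hψ : HasDerivAt (fun x => ∫ s in (0:ℝ)..(ρ t0 x), (s * v s + s ^ 2 * deriv v s))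
      ((r * v r + r ^ 2 * deriv v r) * B) x0 := hF.comp x0 hB
  -- derivative of (ρ)²/2 in t
  have h1 : HasDerivAt (fun t => (ρ t x0) ^ 2 / 2) ((2 * r ^ 1 * A) / 2) t0 :=
    (hA.pow 2).div_const 2
  -- derivative appearing in the PDE
  have h2 : HasDerivAt (fun x => ρ t0 x * v (q t0 x))
      (B * v w + r * (deriv v w * C)) x0 := hB.mul (hvw.comp x0 hC)
  -- derivative on the right-hand side
  have h3 : HasDerivAt (fun x => ρ t0 x * (v (ρ t0 x) - v (q t0 x)))
      (B * (v r - v w) + r * (deriv v r * B - deriv v w * C)) x0 :=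
    hB.mul ((hvρ.comp x0 hB).sub (hvw.comp x0 hC))
  have hpde' : A + (B * v w + r * (deriv v w * C)) = 0 := by
    have := hpde (t0, x0) hp
    simpa [← hAdef, h2.deriv] using this
  rw [h1.deriv, hψ.deriv, h3.deriv]
  linear_combination r * hpde'
end

section
/- Let R > 0, let (ε_n) be a sequence of positive reals with ε_n → 0, and let ρ_n, ρ : ℝ → ℝ be measurable functions with values in [0,R] such that ρ_n → ρ in L¹_loc(ℝ), i.e. ∫_K |ρ_n − ρ| → 0 for every compact K ⊂ ℝ. Define q_n(x) = ∫_x^∞ ε_n^{-1} e^{(x−y)/ε_n} ρ_n(y) dy. Then q_n → ρ in L¹_loc(ℝ). -/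
open MeasureTheory Set Filter

section ExpAvgAux

noncomputable def kerE (ε x y : ℝ) : ℝ := ε⁻¹ * Real.exp ((x - y) / ε)

noncomputable def QE (ε : ℝ) (f : ℝ → ℝ) (x : ℝ) : ℝ := ∫ y in Ioi x, kerE ε x y * f y


lemma kerE_nonneg {ε : ℝ} (hε : 0 < ε) (x y : ℝ) : 0 ≤ kerE ε x y :=
  mul_nonneg (inv_nonneg.2 hε.le) (Real.exp_nonneg _)

lemma kerE_cont {ε : ℝ} (x : ℝ) : Continuous (fun y => kerE ε x y) := by
  unfold kerE; fun_prop

lemma kerE_eq {ε : ℝ} (hε : 0 < ε) (x y : ℝ) :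
    kerE ε x y = (ε⁻¹ * Real.exp (x / ε)) * Real.exp (-ε⁻¹ * y) := by
  unfold kerE
  rw [mul_assoc, ← Real.exp_add]
  congr 2
  field_simp
  ring

lemma kerE_integrableOn_Ioi {ε : ℝ} (hε : 0 < ε) (x c : ℝ) :
    IntegrableOn (fun y => kerE ε x y) (Ioi c) := by
  have : (fun y => kerE ε x y) = fun y => (ε⁻¹ * Real.exp (x / ε)) * Real.exp (-ε⁻¹ * y) := by
    funext y; exact kerE_eq hε x y
  rw [this]
  exact (exp_neg_integrableOn_Ioi c (inv_pos.2 hε)).const_mul _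

lemma kerE_integral_Ioi {ε : ℝ} (hε : 0 < ε) (x c : ℝ) :
    ∫ y in Ioi c, kerE ε x y = Real.exp ((x - c) / ε) := by
  have hderiv : ∀ y ∈ Ioi c, HasDerivAt (fun y => -Real.exp ((x - y) / ε)) (kerE ε x y) y := by
    intro y _
    have h1 : HasDerivAt (fun y : ℝ => (x - y) / ε) (-1 / ε) y :=
      ((hasDerivAt_id y).const_sub x).div_const ε
    have h2 := (Real.hasDerivAt_exp ((x - y) / ε)).comp y h1
    have h3 := h2.neg
    have h4 : kerE ε x y = -(Real.exp ((x - y) / ε) * (-1 / ε)) := by unfold kerE; ring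
    rw [h4]; exact h3
  have htend : Tendsto (fun y => -Real.exp ((x - y) / ε)) atTop (nhds 0) := by
    rw [← neg_zero]
    apply Tendsto.neg
    apply Real.tendsto_exp_atBot.comp
    apply Tendsto.atBot_div_const hε
    have : Tendsto (fun y : ℝ => -y + x) atTop atBot :=
      tendsto_atBot_add_const_right _ x tendsto_neg_atTop_atBot
    refine this.congr (fun y => by ring)
  have hcont : ContinuousWithinAt (fun y => -Real.exp ((x - y) / ε)) (Ici c) c := by
    apply Continuous.continuousWithinAt; fun_prop
  have := MeasureTheory.integral_Ioi_of_hasDerivAt_of_tendsto hcont hderiv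
    (kerE_integrableOn_Ioi hε x c) htend
  rw [this]; ring

lemma kerE_integrableOn_Iio {ε : ℝ} (hε : 0 < ε) (y c : ℝ) :
    IntegrableOn (fun x => kerE ε x y) (Iio c) := by
  have A : MeasurableEmbedding fun x : ℝ => -x :=
    (Homeomorph.neg ℝ).isClosedEmbedding.measurableEmbedding
  have hmap : (volume : Measure ℝ).restrict (Iio c)
      = Measure.map (fun x : ℝ => -x) (volume.restrict (Ioi (-c))) := by
    rw [← Measure.map_neg_eq_self (volume : Measure ℝ)]
    rw [Measure.restrict_map A.measurable measurableSet_Iio]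
    congr 1
    ext z
    simp [neg_lt]
  rw [IntegrableOn, hmap, A.integrable_map_iff]
  have : ((fun x => kerE ε x y) ∘ fun x : ℝ => -x) = fun t => kerE ε (-y) t := by
    funext t
    simp only [Function.comp, kerE]
    have h5 : (-t - y) / ε = (-y - t) / ε := by ring
    rw [h5]
  rw [this]
  exact kerE_integrableOn_Ioi hε (-y) (-c)

lemma kerE_integral_Iio {ε : ℝ} (hε : 0 < ε) (y : ℝ) :
    ∫ x in Iio y, kerE ε x y = 1 := by
  rw [MeasureTheory.restrict_Iio_eq_restrict_Iic]
  have h := integral_comp_neg_Iic y (fun t => kerE ε (-y) t)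
  have h2 : (∫ x in Iic y, kerE ε (-y) (-x)) = ∫ x in Iic y, kerE ε x y := by
    apply integral_congr_ae
    filter_upwards with x
    unfold kerE
    have : (-y - -x) / ε = (x - y) / ε := by ring
    rw [this]
  rw [← h2, h, kerE_integral_Ioi hε (-y) (-y)]
  simp



lemma kerE_le {ε : ℝ} (hε : 0 < ε) {x y : ℝ} (h : x ≤ y) : kerE ε x y ≤ ε⁻¹ := by
  unfold kerE
  have : Real.exp ((x - y) / ε) ≤ 1 := by
    rw [Real.exp_le_one_iff]
    apply div_nonpos_of_nonpos_of_nonneg (by linarith) hε.le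
  calc ε⁻¹ * Real.exp ((x - y) / ε) ≤ ε⁻¹ * 1 := by
        exact mul_le_mul_of_nonneg_left this (inv_nonneg.2 hε.le)
    _ = ε⁻¹ := mul_one _

lemma QE_inner_integrable {ε : ℝ} (hε : 0 < ε) {f : ℝ → ℝ} (hf : Measurable f)
    {C : ℝ} (hC : ∀ y, |f y| ≤ C) (x : ℝ) :
    IntegrableOn (fun y => kerE ε x y * f y) (Ioi x) := by
  apply Integrable.mono' ((kerE_integrableOn_Ioi hε x x).const_mul C)
  · apply Measurable.aestronglyMeasurable
    apply Measurable.mul _ hf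
    unfold kerE; fun_prop
  · filter_upwards with y
    rw [Real.norm_eq_abs, abs_mul, abs_of_nonneg (kerE_nonneg hε x y)]
    exact mul_le_mul_of_nonneg_left (hC y) (kerE_nonneg hε x y) |>.trans
      (by rw [mul_comm])

lemma QE_measurable {ε : ℝ} (hε : 0 < ε) {f : ℝ → ℝ} (hf : Measurable f) :
    Measurable (fun x => QE ε f x) := by
  have hG : Measurable (fun p : ℝ × ℝ => if p.1 < p.2 then kerE ε p.1 p.2 * f p.2 else 0) := by
    apply Measurable.ite (measurableSet_lt measurable_fst measurable_snd)
    · apply Measurable.mul _ (hf.comp measurable_snd)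
      unfold kerE; fun_prop
    · exact measurable_const
  have := (hG.stronglyMeasurable).integral_prod_right' (ν := volume)
  have heq : (fun x => QE ε f x)
      = fun x => ∫ y, (if x < y then kerE ε x y * f y else 0) := by
    funext x
    unfold QE
    rw [← integral_indicator measurableSet_Ioi]
    congr 1
  rw [heq]
  exact this.measurable

lemma QE_nonneg {ε : ℝ} (hε : 0 < ε) {f : ℝ → ℝ} (hf : ∀ y, 0 ≤ f y) (x : ℝ) :
    0 ≤ QE ε f x :=
  integral_nonneg fun y => mul_nonneg (kerE_nonneg hε x y) (hf y)

lemma QE_le_const {ε : ℝ} (hε : 0 < ε) {f : ℝ → ℝ} (hf : Measurable f)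
    {C : ℝ} (hC : ∀ y, |f y| ≤ C) (x : ℝ) : QE ε f x ≤ C := by
  have h1 : QE ε f x ≤ ∫ y in Ioi x, kerE ε x y * C := by
    apply integral_mono (QE_inner_integrable hε hf hC x)
      ((kerE_integrableOn_Ioi hε x x).mul_const C)
    intro y
    exact mul_le_mul_of_nonneg_left ((abs_le.1 (hC y)).2) (kerE_nonneg hε x y)
  have h2 : ∫ y in Ioi x, kerE ε x y * C = C := by
    rw [integral_mul_const, kerE_integral_Ioi hε x x]
    simp
  linarith

lemma abs_QE_le {ε : ℝ} (hε : 0 < ε) {f : ℝ → ℝ} (hf : Measurable f)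
    {C : ℝ} (hC : ∀ y, |f y| ≤ C) (x : ℝ) : |QE ε f x| ≤ C := by
  have h0 : |QE ε f x| ≤ QE ε (fun y => |f y|) x := by
    unfold QE
    rw [← Real.norm_eq_abs]
    refine le_trans (norm_integral_le_integral_norm _) (le_of_eq ?_)
    apply integral_congr_ae
    filter_upwards with y
    rw [Real.norm_eq_abs, abs_mul, abs_of_nonneg (kerE_nonneg hε x y)]
  refine h0.trans (QE_le_const hε hf.abs (fun y => by rw [abs_abs]; exact hC y) x)

lemma abs_QE_sub_QE {ε : ℝ} (hε : 0 < ε) {f g : ℝ → ℝ} (hf : Measurable f) (hg : Measurable g)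
    {Cf Cg : ℝ} (hCf : ∀ y, |f y| ≤ Cf) (hCg : ∀ y, |g y| ≤ Cg) (x : ℝ) :
    |QE ε f x - QE ε g x| ≤ QE ε (fun y => |f y - g y|) x := by
  unfold QE
  rw [← integral_sub (QE_inner_integrable hε hf hCf x) (QE_inner_integrable hε hg hCg x)]
  rw [← Real.norm_eq_abs]
  refine le_trans (norm_integral_le_integral_norm _) (le_of_eq ?_)
  apply integral_congr_ae
  filter_upwards with y
  rw [Real.norm_eq_abs, ← mul_sub, abs_mul, abs_of_nonneg (kerE_nonneg hε x y)]

lemma QE_unif {ε : ℝ} (hε : 0 < ε) {g : ℝ → ℝ} (hgc : Continuous g)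
    {Cg : ℝ} (hCg : ∀ y, |g y| ≤ Cg)
    {δ' η : ℝ} (hδ' : 0 ≤ δ') (hη : 0 < η)
    (hmod : ∀ u v : ℝ, |u - v| ≤ η → |g u - g v| ≤ δ') (x : ℝ) :
    |QE ε g x - g x| ≤ δ' + 2 * Cg * Real.exp (-η / ε) := by
  have hCg0 : 0 ≤ Cg := le_trans (abs_nonneg _) (hCg 0)
  have hker1 : ∫ y in Ioi x, kerE ε x y = 1 := by
    rw [kerE_integral_Ioi hε x x]; simp
  have hgm : Measurable g := hgc.measurable
  have hgx : g x = ∫ y in Ioi x, kerE ε x y * g x := by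
    rw [integral_mul_const, hker1, one_mul]
  have hsub : QE ε g x - g x = ∫ y in Ioi x, kerE ε x y * (g y - g x) := by
    have h9 : ∫ y in Ioi x, kerE ε x y * (g y - g x)
        = (∫ y in Ioi x, kerE ε x y * g y) - ∫ y in Ioi x, kerE ε x y * g x := by
      rw [← integral_sub (QE_inner_integrable hε hgm hCg x)
        ((kerE_integrableOn_Ioi hε x x).mul_const (g x))]
      congr 1
      funext y
      ring
    rw [h9, ← hgx]
    rfl
  rw [hsub]
  have step1 : |∫ y in Ioi x, kerE ε x y * (g y - g x)|
      ≤ ∫ y in Ioi x, kerE ε x y * |g y - g x| := by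
    rw [← Real.norm_eq_abs]
    refine le_trans (norm_integral_le_integral_norm _) (le_of_eq ?_)
    apply integral_congr_ae
    filter_upwards with y
    rw [Real.norm_eq_abs, abs_mul, abs_of_nonneg (kerE_nonneg hε x y)]
  refine step1.trans ?_
  -- bound the integrand
  have hint1 : IntegrableOn (fun y => kerE ε x y * |g y - g x|) (Ioi x) := by
    apply QE_inner_integrable hε (by fun_prop) (C := 2 * Cg)
    intro y
    rw [abs_abs]
    calc |g y - g x| ≤ |g y| + |g x| := abs_sub _ _
      _ ≤ Cg + Cg := add_le_add (hCg y) (hCg x)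
      _ = 2 * Cg := by ring
  have hint2 : IntegrableOn
      (fun y => kerE ε x y * δ' + (Ioi (x + η)).indicator (fun y => kerE ε x y * (2 * Cg)) y)
      (Ioi x) := by
    apply Integrable.add ((kerE_integrableOn_Ioi hε x x).mul_const δ')
    exact (IntegrableOn.integrable_indicator
      ((kerE_integrableOn_Ioi hε x (x + η)).mul_const (2 * Cg))
      measurableSet_Ioi).integrableOn
  have hpt : ∀ y ∈ Ioi x, kerE ε x y * |g y - g x|
      ≤ kerE ε x y * δ' + (Ioi (x + η)).indicator (fun y => kerE ε x y * (2 * Cg)) y := by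
    intro y hy
    by_cases hcase : y ∈ Ioi (x + η)
    · rw [indicator_of_mem hcase]
      have h1 : |g y - g x| ≤ 2 * Cg := by
        calc |g y - g x| ≤ |g y| + |g x| := abs_sub _ _
          _ ≤ Cg + Cg := add_le_add (hCg y) (hCg x)
          _ = 2 * Cg := by ring
      have := mul_le_mul_of_nonneg_left h1 (kerE_nonneg hε x y)
      nlinarith [kerE_nonneg hε x y]
    · rw [indicator_of_notMem hcase, add_zero]
      apply mul_le_mul_of_nonneg_left _ (kerE_nonneg hε x y)
      apply hmod
      simp only [mem_Ioi, not_lt] at hcase hy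
      rw [abs_le]
      constructor <;> linarith
  refine (setIntegral_mono_on hint1 hint2 measurableSet_Ioi hpt).trans (le_of_eq ?_)
  rw [integral_add ((kerE_integrableOn_Ioi hε x x).mul_const δ')
    ((IntegrableOn.integrable_indicator
      ((kerE_integrableOn_Ioi hε x (x + η)).mul_const (2 * Cg))
      measurableSet_Ioi).integrableOn)]
  rw [integral_mul_const, hker1, one_mul]
  congr 1
  rw [setIntegral_indicator measurableSet_Ioi]
  have hinter : Ioi x ∩ Ioi (x + η) = Ioi (x + η) := by
    rw [Set.Ioi_inter_Ioi, max_eq_right (by linarith)]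
  rw [hinter, integral_mul_const, kerE_integral_Ioi hε x (x + η)]
  rw [mul_comm]
  congr 2
  ring

/-- integrability of a bounded measurable function on a finite-measure set -/
lemma bdd_integrableOn {f : ℝ → ℝ} (hf : Measurable f) {C : ℝ} (hC : ∀ y, |f y| ≤ C)
    {s : Set ℝ} (hs : volume s < ⊤) : IntegrableOn f s := by
  have : IsFiniteMeasure (volume.restrict s) :=
    ⟨by simpa [Measure.restrict_apply_univ] using hs⟩
  constructor
  · exact hf.aestronglyMeasurable
  · apply MeasureTheory.HasFiniteIntegral.of_bounded (C := C)
    filter_upwards with y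
    exact hC y

/-- The key Fubini estimate. -/
lemma QE_fubini {ε : ℝ} (hε : 0 < ε) {W : ℝ → ℝ} (hWm : Measurable W)
    {C : ℝ} (hW0 : ∀ y, 0 ≤ W y) (hWC : ∀ y, W y ≤ C)
    {M : ℝ} (hM : 0 ≤ M) {K : Set ℝ} (hK : MeasurableSet K) (hKsub : K ⊆ Icc (-M) M) :
    ∫ x in K, QE ε W x
      ≤ (∫ y in Icc (-(M+1)) (M+1), W y) + (volume K).toReal * (C * Real.exp (-1 / ε)) := by
  set K' : Set ℝ := Icc (-(M+1)) (M+1) with hK'def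
  have hK'meas : MeasurableSet K' := measurableSet_Icc
  have habs : ∀ y, |W y| ≤ C := fun y => by
    rw [abs_of_nonneg (hW0 y)]; exact hWC y
  have hC0 : 0 ≤ C := le_trans (hW0 0) (hWC 0)
  have hKfin : volume K < ⊤ :=
    lt_of_le_of_lt (measure_mono hKsub) measure_Icc_lt_top
  have hK'fin : volume K' < ⊤ := measure_Icc_lt_top
  -- the truncated function
  set W' : ℝ → ℝ := K'.indicator W with hW'def
  have hW'm : Measurable W' := hWm.indicator hK'meas
  have hW'0 : ∀ y, 0 ≤ W' y := fun y => by
    unfold W'; exact indicator_nonneg (fun a _ => hW0 a) y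
  have hW'C : ∀ y, W' y ≤ C := fun y => by
    unfold W'
    by_cases h : y ∈ K'
    · rw [indicator_of_mem h]; exact hWC y
    · rw [indicator_of_notMem h]; exact hC0
  have habs' : ∀ y, |W' y| ≤ C := fun y => by
    rw [abs_of_nonneg (hW'0 y)]; exact hW'C y
  -- Step (a): pointwise bound on K
  have step_a : ∀ x ∈ K, QE ε W x ≤ QE ε W' x + C * Real.exp (-1 / ε) := by
    intro x hx
    obtain ⟨hx1, hx2⟩ := hKsub hx
    have key : QE ε W x ≤ ∫ y in Ioi x,
        (kerE ε x y * W' y + (Ioi (M+1)).indicator (fun y => kerE ε x y * C) y) := by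
      apply setIntegral_mono_on (QE_inner_integrable hε hWm habs x)
      · apply Integrable.add (QE_inner_integrable hε hW'm habs' x)
        exact (IntegrableOn.integrable_indicator
          ((kerE_integrableOn_Ioi hε x (M+1)).mul_const C) measurableSet_Ioi).integrableOn
      · exact measurableSet_Ioi
      · intro y hy
        by_cases hmem : y ∈ K'
        · have : W' y = W y := indicator_of_mem hmem W
          rw [this]
          nlinarith [indicator_nonneg (fun (a : ℝ) _ => mul_nonneg (kerE_nonneg hε x a) hC0)
            (s := Ioi (M+1)) y]
        · have hygt : y ∈ Ioi (M+1) := by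
            simp only [hK'def, mem_Icc, not_and_or, not_le] at hmem
            rcases hmem with h | h
            · exfalso; simp only [mem_Ioi] at hy; linarith
            · exact h
          rw [indicator_of_mem hygt]
          have : W' y = 0 := indicator_of_notMem hmem W
          rw [this, mul_zero, zero_add]
          exact mul_le_mul_of_nonneg_left (hWC y) (kerE_nonneg hε x y)
    have tail : ∫ y in Ioi x, (Ioi (M+1)).indicator (fun y => kerE ε x y * C) y
        ≤ C * Real.exp (-1 / ε) := by
      rw [setIntegral_indicator measurableSet_Ioi]
      have hinter : Ioi x ∩ Ioi (M+1) = Ioi (M+1) := by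
        rw [Set.Ioi_inter_Ioi, max_eq_right (by linarith)]
      rw [hinter, integral_mul_const, kerE_integral_Ioi hε x (M+1), mul_comm]
      apply mul_le_mul_of_nonneg_left _ hC0
      apply Real.exp_le_exp.2
      rw [div_le_div_iff_of_pos_right hε]  -- might not be the name
      linarith
    have split : ∫ y in Ioi x,
        (kerE ε x y * W' y + (Ioi (M+1)).indicator (fun y => kerE ε x y * C) y)
        = QE ε W' x + ∫ y in Ioi x, (Ioi (M+1)).indicator (fun y => kerE ε x y * C) y := by
      rw [integral_add (QE_inner_integrable hε hW'm habs' x)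
        ((IntegrableOn.integrable_indicator
          ((kerE_integrableOn_Ioi hε x (M+1)).mul_const C) measurableSet_Ioi).integrableOn)]
      rfl
    rw [split] at key
    linarith
  -- Step (b): integrate over K
  have hQW'int : IntegrableOn (fun x => QE ε W' x) K :=
    bdd_integrableOn (QE_measurable hε hW'm)
      (fun x => by
        rw [abs_of_nonneg (QE_nonneg hε hW'0 x)]
        exact QE_le_const hε hW'm habs' x) hKfin
  have step_b : ∫ x in K, QE ε W x
      ≤ (∫ x in K, QE ε W' x) + (volume K).toReal * (C * Real.exp (-1 / ε)) := by
    have h1 : ∫ x in K, QE ε W x ≤ ∫ x in K, (QE ε W' x + C * Real.exp (-1 / ε)) := by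
      apply setIntegral_mono_on _ _ hK step_a
      · exact bdd_integrableOn (QE_measurable hε hWm)
          (fun x => by
            rw [abs_of_nonneg (QE_nonneg hε hW0 x)]
            exact QE_le_const hε hWm habs x) hKfin
      · exact hQW'int.add (integrableOn_const hKfin.ne)
    rw [integral_add hQW'int (integrableOn_const hKfin.ne)] at h1
    rw [setIntegral_const] at h1
    simpa [smul_eq_mul, Measure.real] using h1
  -- Step (c): the swap
  have hswap : ∫ x in K, QE ε W' x ≤ ∫ y in K', W y := by
    -- u x y = W y * (if x < y then kerE ε x y else 0)
    set u : ℝ → ℝ → ℝ := fun x y => W y * (if x < y then kerE ε x y else 0) with hu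
    have hu_meas : Measurable (Function.uncurry u) := by
      apply Measurable.mul (hWm.comp measurable_snd)
      apply Measurable.ite (measurableSet_lt measurable_fst measurable_snd)
      · unfold kerE; fun_prop
      · exact measurable_const
    have hu_int : Integrable (Function.uncurry u)
        ((volume.restrict K).prod (volume.restrict K')) := by
      have : IsFiniteMeasure (volume.restrict K) := ⟨by simpa [Measure.restrict_apply_univ] using hKfin⟩
      have : IsFiniteMeasure (volume.restrict K') := ⟨by simpa [Measure.restrict_apply_univ] using hK'fin⟩
      constructor
      · exact hu_meas.aestronglyMeasurable
      · apply MeasureTheory.HasFiniteIntegral.of_bounded (C := C * ε⁻¹)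
        filter_upwards with p
        rw [Function.uncurry, hu]
        simp only
        rw [Real.norm_eq_abs, abs_mul, abs_of_nonneg (hW0 p.2)]
        by_cases h : p.1 < p.2
        · rw [if_pos h, abs_of_nonneg (kerE_nonneg hε p.1 p.2)]
          exact mul_le_mul (hWC p.2) (kerE_le hε h.le) (kerE_nonneg hε p.1 p.2) hC0
        · rw [if_neg h]
          simp [mul_nonneg hC0 (inv_nonneg.2 hε.le)]
    -- rewrite LHS per x
    have hxrw : ∀ x, QE ε W' x = ∫ y in K', u x y := by
      intro x
      unfold QE
      have e1 : ∫ y in Ioi x, kerE ε x y * W' y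
          = ∫ y in Ioi x, K'.indicator (fun y => kerE ε x y * W y) y := by
        apply setIntegral_congr_fun measurableSet_Ioi
        intro y _
        by_cases h : y ∈ K'
        · simp only [hW'def, indicator_of_mem h]
        · simp only [hW'def, indicator_of_notMem h, mul_zero]
      have e2 : ∫ y in K', u x y
          = ∫ y in K', (Ioi x).indicator (fun y => kerE ε x y * W y) y := by
        apply setIntegral_congr_fun hK'meas
        intro y _
        rw [indicator_apply]
        simp only [hu, mem_Ioi]
        by_cases h : x < y
        · simp [h, mul_comm]
        · simp [h]
      rw [e1, e2, setIntegral_indicator hK'meas, setIntegral_indicator measurableSet_Ioi,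
        Set.inter_comm]
    have hinner : ∀ y, (∫ x in K, u x y) ≤ W y * 1 := by
      intro y
      have e3 : (∫ x in K, u x y) = W y * ∫ x in K, (if x < y then kerE ε x y else 0) := by
        rw [hu]
        simp only
        exact integral_const_mul _ _
      rw [e3]
      apply mul_le_mul_of_nonneg_left _ (hW0 y)
      have e4 : (fun x => if x < y then kerE ε x y else 0)
          = (Iio y).indicator (fun x => kerE ε x y) := by
        funext x
        rw [indicator_apply]
        rfl
      have hind_int : Integrable ((Iio y).indicator (fun x => kerE ε x y)) volume :=
        IntegrableOn.integrable_indicator (kerE_integrableOn_Iio hε y y) measurableSet_Iio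
      calc (∫ x in K, if x < y then kerE ε x y else 0)
          = ∫ x in K, (Iio y).indicator (fun x => kerE ε x y) x := by rw [e4]
        _ ≤ ∫ x, (Iio y).indicator (fun x => kerE ε x y) x := by
            apply integral_mono_measure Measure.restrict_le_self _ hind_int
            filter_upwards with x
            exact indicator_nonneg (fun a _ => kerE_nonneg hε a y) x
        _ = ∫ x in Iio y, kerE ε x y := integral_indicator measurableSet_Iio
        _ = 1 := kerE_integral_Iio hε y
    have hWK' : IntegrableOn W K' := bdd_integrableOn hWm habs hK'fin
    calc ∫ x in K, QE ε W' x
        = ∫ x in K, ∫ y in K', u x y := by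
          apply setIntegral_congr_fun hK
          intro x _
          exact hxrw x
      _ = ∫ y in K', ∫ x in K, u x y := integral_integral_swap hu_int
      _ ≤ ∫ y in K', W y := by
          apply integral_mono_of_nonneg _ hWK'
          · filter_upwards with y
            exact le_trans (hinner y) (by rw [mul_one])
          · filter_upwards with y
            apply integral_nonneg
            intro x
            rw [hu]
            simp only
            apply mul_nonneg (hW0 y)
            by_cases h : x < y
            · rw [if_pos h]; exact kerE_nonneg hε x y
            · rw [if_neg h]
  calc ∫ x in K, QE ε W x
      ≤ (∫ x in K, QE ε W' x) + (volume K).toReal * (C * Real.exp (-1 / ε)) := step_b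
    _ ≤ (∫ y in K', W y) + (volume K).toReal * (C * Real.exp (-1 / ε)) := by linarith [hswap]

end ExpAvgAux

lemma abs_abs_sub_le {a b Ca Cb : ℝ} (ha : |a| ≤ Ca) (hb : |b| ≤ Cb) : |(|a - b|)| ≤ Ca + Cb := by
  rw [abs_abs]; exact le_trans (abs_sub _ _) (add_le_add ha hb)

/-- If `ρ_n → ρ` in `L¹_loc(ℝ)` with values in `[0,R]` and `ε_n → 0`, then the
exponentially averaged densities `q_n` also converge to `ρ` in `L¹_loc(ℝ)`. -/
theorem exp_average_L1loc_convergence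
    (R : ℝ) (hR : 0 < R)
    (ε : ℕ → ℝ) (hε : ∀ n, 0 < ε n) (hε0 : Tendsto ε atTop (nhds 0))
    (ρseq : ℕ → ℝ → ℝ) (ρ : ℝ → ℝ)
    (hm : ∀ n, Measurable (ρseq n)) (hρm : Measurable ρ)
    (hrange : ∀ n y, ρseq n y ∈ Icc (0:ℝ) R)
    (hρrange : ∀ y, ρ y ∈ Icc (0:ℝ) R)
    (hconv : ∀ K : Set ℝ, IsCompact K →
      Tendsto (fun n => ∫ y in K, |ρseq n y - ρ y|) atTop (nhds 0))
    (q : ℕ → ℝ → ℝ)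
    (hq : ∀ n x, q n x = ∫ y in Ioi x, (ε n)⁻¹ * Real.exp ((x - y) / ε n) * ρseq n y) :
    ∀ K : Set ℝ, IsCompact K →
      Tendsto (fun n => ∫ x in K, |q n x - ρ x|) atTop (nhds 0) := by
  -- limits of exponential factors
  have hinv : Tendsto (fun n => (ε n)⁻¹) atTop atTop := by
    apply tendsto_inv_nhdsGT_zero.comp
    apply tendsto_nhdsWithin_iff.2
    exact ⟨hε0, Eventually.of_forall fun n => hε n⟩
  have texp : ∀ c : ℝ, 0 < c → Tendsto (fun n => Real.exp (-c / ε n)) atTop (nhds 0) := by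
    intro c hc
    apply Real.tendsto_exp_atBot.comp
    have h1 : Tendsto (fun n => c * (ε n)⁻¹) atTop atTop := hinv.const_mul_atTop hc
    have h2 : Tendsto (fun n => -(c * (ε n)⁻¹)) atTop atBot := tendsto_neg_atTop_atBot.comp h1
    refine h2.congr (fun n => by rw [neg_div, div_eq_mul_inv])
  intro K hK
  -- bound the set
  obtain ⟨r, hr⟩ := (Metric.isBounded_iff_subset_closedBall 0).1 hK.isBounded
  set M : ℝ := max r 0 with hMdef
  have hM0 : 0 ≤ M := le_max_right _ _
  have hKsub : K ⊆ Icc (-M) M := by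
    intro x hx
    have hx' := hr hx
    rw [Real.closedBall_eq_Icc] at hx'
    have hrM : r ≤ M := le_max_left _ _
    obtain ⟨h1, h2⟩ := hx'
    constructor
    · simp only [zero_sub] at h1; linarith
    · simp only [zero_add] at h2; linarith
  set K' : Set ℝ := Icc (-(M+1)) (M+1) with hK'def
  have hK'c : IsCompact K' := isCompact_Icc
  have hKK' : K ⊆ K' := hKsub.trans (Icc_subset_Icc (by linarith) (by linarith))
  have hKmeas : MeasurableSet K := hK.measurableSet
  have hKfin : volume K < ⊤ := hK.measure_lt_top
  have hK'fin : volume K' < ⊤ := measure_Icc_lt_top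
  have hρ_abs : ∀ y, |ρ y| ≤ R := fun y => by
    obtain ⟨h1, h2⟩ := hρrange y; rw [abs_of_nonneg h1]; exact h2
  have hρn_abs : ∀ n y, |ρseq n y| ≤ R := fun n y => by
    obtain ⟨h1, h2⟩ := hrange n y; rw [abs_of_nonneg h1]; exact h2
  set μK : ℝ := (volume K).toReal with hμKdef
  have hμK0 : 0 ≤ μK := ENNReal.toReal_nonneg
  -- main estimate
  rw [Metric.tendsto_atTop]
  intro δ hδ
  set δ7 : ℝ := δ / 7 with hδ7def
  have hδ7 : 0 < δ7 := by positivity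
  -- approximation by a continuous compactly supported function
  have hfint : Integrable (K'.indicator ρ) volume :=
    IntegrableOn.integrable_indicator (bdd_integrableOn hρm hρ_abs hK'fin)
      hK'c.measurableSet
  obtain ⟨g, hgsupp, hgclose, hgc, hgint⟩ :=
    hfint.exists_hasCompactSupport_integral_sub_le hδ7
  obtain ⟨Cg0, hCg0⟩ := hgc.bounded_above_of_compact_support hgsupp
  set Cg : ℝ := max Cg0 0 with hCgdef
  have hCgnn : 0 ≤ Cg := le_max_right _ _
  have hg_abs : ∀ y, |g y| ≤ Cg := fun y =>
    le_trans (le_trans (le_of_eq (Real.norm_eq_abs _).symm) (hCg0 y)) (le_max_left _ _)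
  have hgm : Measurable g := hgc.measurable
  -- modulus of continuity
  set δ' : ℝ := δ7 / (μK + 1) with hδ'def
  have hδ'pos : 0 < δ' := by positivity
  obtain ⟨η', hη'pos, hη'⟩ := Metric.uniformContinuous_iff.mp
    (hgsupp.uniformContinuous_of_continuous hgc) δ' hδ'pos
  set η : ℝ := η' / 2 with hηdef
  have hηpos : 0 < η := by positivity
  have hmod : ∀ u v : ℝ, |u - v| ≤ η → |g u - g v| ≤ δ' := by
    intro u v huv
    have : dist u v < η' := by
      rw [Real.dist_eq]
      calc |u - v| ≤ η := huv
        _ < η' := by rw [hηdef]; linarith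
    exact (hη' this).le
  -- ∫_{K'} |ρ − g| ≤ δ7
  have hrhog : ∫ y in K', |ρ y - g y| ≤ δ7 := by
    have e1 : ∫ y in K', |ρ y - g y| = ∫ y in K', ‖K'.indicator ρ y - g y‖ := by
      apply setIntegral_congr_fun hK'c.measurableSet
      intro y hy
      simp only [indicator_of_mem hy, Real.norm_eq_abs]
    rw [e1]
    refine le_trans (setIntegral_le_integral ((hfint.sub hgint).norm) ?_) hgclose
    filter_upwards with y using norm_nonneg _
    -- eventual smallness
  have hev1 : ∀ᶠ n in atTop, (∫ y in K', |ρseq n y - ρ y|) < δ7 :=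
    (hconv K' hK'c).eventually_lt_const hδ7
  have hev2 : ∀ᶠ n in atTop, μK * ((R + Cg) * Real.exp (-1 / ε n)) < δ7 := by
    have : Tendsto (fun n => μK * ((R + Cg) * Real.exp (-1 / ε n))) atTop (nhds 0) := by
      have := (texp 1 one_pos).const_mul (μK * (R + Cg))
      rw [mul_zero] at this
      refine this.congr (fun n => by ring)
    exact this.eventually_lt_const hδ7
  have hev3 : ∀ᶠ n in atTop, μK * (2 * Cg * Real.exp (-η / ε n)) < δ7 := by
    have : Tendsto (fun n => μK * (2 * Cg * Real.exp (-η / ε n))) atTop (nhds 0) := by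
      have := (texp η hηpos).const_mul (μK * (2 * Cg))
      rw [mul_zero] at this
      refine this.congr (fun n => by ring)
    exact this.eventually_lt_const hδ7
  have hall := (hev1.and (hev2.and hev3))
  rw [eventually_atTop] at hall
  obtain ⟨N, hN⟩ := hall
  refine ⟨N, fun n hn => ?_⟩
  obtain ⟨hn1, hn2, hn3⟩ := hN n hn
  -- fixed n: the decomposition
  set εn : ℝ := ε n with hεndef
  have hεnpos : 0 < εn := hε n
  set W : ℝ → ℝ := fun y => |ρseq n y - g y| with hWdef
  have hWm : Measurable W := ((hm n).sub hgm).abs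
  have hW0 : ∀ y, 0 ≤ W y := fun y => abs_nonneg _
  have hWC : ∀ y, W y ≤ R + Cg := fun y =>
    le_trans (abs_sub _ _) (add_le_add (hρn_abs n y) (hg_abs y))
  have hW_abs : ∀ y, |W y| ≤ R + Cg := fun y => by
    rw [abs_of_nonneg (hW0 y)]; exact hWC y
  have hqQ : ∀ x, q n x = QE εn (ρseq n) x := fun x => by
    rw [hq n x]; rfl
  -- the three pieces
  set h1 : ℝ → ℝ := fun x => QE εn W x with hh1
  set h2 : ℝ → ℝ := fun x => |QE εn g x - g x| with hh2
  set h3 : ℝ → ℝ := fun x => |g x - ρ x| with hh3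
  have hpt : ∀ x, |q n x - ρ x| ≤ h1 x + h2 x + h3 x := by
    intro x
    rw [hqQ x]
    have t1 : |QE εn (ρseq n) x - QE εn g x| ≤ h1 x :=
      abs_QE_sub_QE hεnpos (hm n) hgm (hρn_abs n) hg_abs x
    calc |QE εn (ρseq n) x - ρ x|
        = |(QE εn (ρseq n) x - QE εn g x) + (QE εn g x - g x) + (g x - ρ x)| := by ring_nf
      _ ≤ |QE εn (ρseq n) x - QE εn g x| + |QE εn g x - g x| + |g x - ρ x| := by
          exact (abs_add_three _ _ _)
      _ ≤ h1 x + h2 x + h3 x := by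
          apply add_le_add (add_le_add t1 (le_refl _)) (le_refl _)
  -- integrabilities over K
  have ih1 : IntegrableOn h1 K := by
    apply bdd_integrableOn (QE_measurable hεnpos hWm) (C := R + Cg) _ hKfin
    intro x
    rw [abs_of_nonneg (QE_nonneg hεnpos hW0 x)]
    exact QE_le_const hεnpos hWm hW_abs x
  have ih2 : IntegrableOn h2 K := by
    exact bdd_integrableOn (((QE_measurable hεnpos hgm).sub hgm).abs) (C := Cg + Cg)
      (fun x => abs_abs_sub_le (abs_QE_le hεnpos hgm hg_abs x) (hg_abs x)) hKfin
  have ih3 : IntegrableOn h3 K := by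
    exact bdd_integrableOn ((hgm.sub hρm).abs) (C := Cg + R)
      (fun x => abs_abs_sub_le (hg_abs x) (hρ_abs x)) hKfin
  have big : ∫ x in K, |q n x - ρ x| ≤ (∫ x in K, h1 x) + (∫ x in K, h2 x) + ∫ x in K, h3 x := by
    have i12 : Integrable (fun x => h1 x + h2 x) (volume.restrict K) := ih1.add ih2
    have hsum : ∫ x in K, (h1 x + h2 x + h3 x)
        = (∫ x in K, h1 x) + (∫ x in K, h2 x) + ∫ x in K, h3 x := by
      rw [integral_add i12 ih3, integral_add ih1 ih2]
    rw [← hsum]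
    apply integral_mono_of_nonneg
    · filter_upwards with x using abs_nonneg _
    · exact (ih1.add ih2).add ih3
    · filter_upwards with x using hpt x
  -- bound the three terms
  have T1 : ∫ x in K, h1 x
      ≤ (∫ y in K', |ρseq n y - ρ y|) + δ7 + μK * ((R + Cg) * Real.exp (-1 / εn)) := by
    have base := QE_fubini hεnpos hWm hW0 hWC hM0 hKmeas hKsub
    have hsplit : ∫ y in K', W y ≤ (∫ y in K', |ρseq n y - ρ y|) + ∫ y in K', |ρ y - g y| := by
      have hi1 : IntegrableOn (fun y => |ρseq n y - ρ y|) K' :=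
        bdd_integrableOn ((hm n).sub hρm).abs
          (fun y => abs_abs_sub_le (hρn_abs n y) (hρ_abs y)) hK'fin
      have hi2 : IntegrableOn (fun y => |ρ y - g y|) K' :=
        bdd_integrableOn (hρm.sub hgm).abs
          (fun y => abs_abs_sub_le (hρ_abs y) (hg_abs y)) hK'fin
      rw [← integral_add hi1 hi2]
      apply integral_mono (bdd_integrableOn hWm hW_abs hK'fin) (hi1.add hi2)
      intro y
      calc W y = |ρseq n y - g y| := rfl
        _ = |(ρseq n y - ρ y) + (ρ y - g y)| := by ring_nf
        _ ≤ |ρseq n y - ρ y| + |ρ y - g y| := abs_add_le _ _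
    calc ∫ x in K, h1 x
        ≤ (∫ y in K', W y) + μK * ((R + Cg) * Real.exp (-1 / εn)) := base
      _ ≤ ((∫ y in K', |ρseq n y - ρ y|) + ∫ y in K', |ρ y - g y|)
            + μK * ((R + Cg) * Real.exp (-1 / εn)) := by linarith
      _ ≤ (∫ y in K', |ρseq n y - ρ y|) + δ7 + μK * ((R + Cg) * Real.exp (-1 / εn)) := by
          linarith [hrhog]
  have T2 : ∫ x in K, h2 x ≤ μK * δ' + μK * (2 * Cg * Real.exp (-η / εn)) := by
    have hb : ∀ x ∈ K, h2 x ≤ δ' + 2 * Cg * Real.exp (-η / εn) := fun x _ =>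
      QE_unif hεnpos hgc hg_abs hδ'pos.le hηpos hmod x
    calc ∫ x in K, h2 x ≤ ∫ x in K, (δ' + 2 * Cg * Real.exp (-η / εn)) := by
          apply setIntegral_mono_on ih2 (integrableOn_const hKfin.ne) hKmeas hb
      _ = μK * (δ' + 2 * Cg * Real.exp (-η / εn)) := by
          rw [setIntegral_const, smul_eq_mul]
          rfl
      _ = μK * δ' + μK * (2 * Cg * Real.exp (-η / εn)) := by ring
  have T3 : ∫ x in K, h3 x ≤ δ7 := by
    have hs1 : ∫ x in K, h3 x ≤ ∫ x in K', h3 x := by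
      apply setIntegral_mono_set
        (bdd_integrableOn ((hgm.sub hρm).abs) (C := Cg + R)
          (fun x => abs_abs_sub_le (hg_abs x) (hρ_abs x)) hK'fin)
      · filter_upwards with x using abs_nonneg _
      · exact HasSubset.Subset.eventuallyLE hKK'
    have hs2 : ∫ x in K', h3 x = ∫ y in K', |ρ y - g y| := by
      apply setIntegral_congr_fun hK'c.measurableSet
      intro y _
      exact abs_sub_comm _ _
    linarith [hrhog]
  have hμδ' : μK * δ' ≤ δ7 := by
    have h9 : μK / (μK + 1) ≤ 1 := div_le_one_of_le₀ (by linarith) (by linarith)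
    calc μK * δ' = δ7 * (μK / (μK + 1)) := by rw [hδ'def]; ring
      _ ≤ δ7 * 1 := by nlinarith
      _ = δ7 := mul_one _
  -- wrap up
  have final : ∫ x in K, |q n x - ρ x| < δ := by
    have : ∫ x in K, |q n x - ρ x| < δ7 + δ7 + δ7 + (δ7 + δ7) + δ7 := by
      linarith [big, T1, T2, T3, hμδ', hn1, hn2, hn3]
    calc ∫ x in K, |q n x - ρ x| < δ7 + δ7 + δ7 + (δ7 + δ7) + δ7 := this
      _ = 6 * (δ / 7) := by rw [hδ7def]; ring
      _ < δ := by linarith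
  rw [Real.dist_eq]
  have hnn : 0 ≤ ∫ x in K, |q n x - ρ x| := integral_nonneg fun x => abs_nonneg _
  rw [sub_zero, abs_of_nonneg hnn]
  exact final
end

section
/- Let f : ℝ → ℝ be integrable with bounded total variation, TV(f) = sup over finite partitions x_0 < x_1 < ... < x_N of Σ |f(x_i) − f(x_{i−1})| < ∞. Then for every ε > 0, ∫_ℝ | q_ε[f](x) − f(x) | dx ≤ ε · TV(f), where q_ε[f](x) = ∫_x^∞ ε^{-1} e^{(x−y)/ε} f(y) dy. -/
open MeasureTheory Set
open scoped ENNReal NNReal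

private lemma translate_lintegral_le (f : ℝ → ℝ) (hTV : eVariationOn f univ ≠ ⊤)
    {t : ℝ} (ht : 0 ≤ t) :
    ∫⁻ x : ℝ, (‖f (x + t) - f x‖₊ : ℝ≥0∞) ≤
      ENNReal.ofReal (t * (eVariationOn f univ).toReal) := by
  set T := (eVariationOn f univ).toReal with hT
  have hlbv : LocallyBoundedVariationOn f univ := fun a b _ _ =>
    ne_top_of_le_ne_top hTV (eVariationOn.mono f inter_subset_left)
  set V : ℝ → ℝ := variationOnFromTo f univ 0 with hV
  have hVmono : Monotone V :=
    monotoneOn_univ.mp (variationOnFromTo.monotoneOn hlbv (mem_univ 0))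
  have hVdiff : ∀ a b : ℝ, V b - V a = variationOnFromTo f univ a b := by
    intro a b
    have := variationOnFromTo.add hlbv (mem_univ 0) (mem_univ a) (mem_univ b)
    simp only [hV] at this ⊢
    linarith
  have hfpt : ∀ a b : ℝ, a ≤ b → |f b - f a| ≤ V b - V a := by
    intro a b hab
    rw [hVdiff]
    calc |f b - f a| = dist (f a) (f b) := by rw [dist_comm, Real.dist_eq]
      _ ≤ variationOnFromTo f univ a b := by
          rw [variationOnFromTo.eq_of_le f univ hab, dist_edist]
          exact ENNReal.toReal_mono (hlbv a b trivial trivial)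
            (eVariationOn.edist_le f ⟨trivial, le_rfl, hab⟩ ⟨trivial, hab, le_rfl⟩)
  have hVT : ∀ a b : ℝ, a ≤ b → V b - V a ≤ T := by
    intro a b hab
    rw [hVdiff, variationOnFromTo.eq_of_le f univ hab]
    exact ENNReal.toReal_mono hTV (eVariationOn.mono f inter_subset_left)
  have hVmeas : Measurable V := hVmono.measurable
  set g : ℝ → ℝ≥0∞ := fun x => ENNReal.ofReal (V (x + t) - V x) with hg
  have hgmeas : Measurable g :=
    ((hVmeas.comp (measurable_add_const t)).sub hVmeas).ennreal_ofReal
  have hnonneg : ∀ x : ℝ, 0 ≤ V (x + t) - V x := fun x =>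
    sub_nonneg.2 (hVmono (le_add_of_nonneg_right ht))
  have step1 : ∫⁻ x : ℝ, (‖f (x + t) - f x‖₊ : ℝ≥0∞) ≤ ∫⁻ x, g x := by
    refine lintegral_mono fun x => ?_
    rw [← enorm_eq_nnnorm, Real.enorm_eq_ofReal_abs]
    exact ENNReal.ofReal_le_ofReal (hfpt x (x + t) (le_add_of_nonneg_right ht))
  have hVint : ∀ c d : ℝ, IntervalIntegrable V volume c d := fun c d =>
    hVmono.intervalIntegrable
  have key : ∀ a b : ℝ, a ≤ b → ∫⁻ x in Ioc a b, g x ≤ ENNReal.ofReal (t * T) := by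
    intro a b hab
    have hint : IntegrableOn (fun x => V (x + t) - V x) (Ioc a b) volume := by
      refine Integrable.mono' (g := fun _ => V (b + t) - V a)
        (integrableOn_const measure_Ioc_lt_top.ne enorm_ne_top)
        (((hVmeas.comp (measurable_add_const t)).sub hVmeas).aestronglyMeasurable.restrict) ?_
      filter_upwards [ae_restrict_mem measurableSet_Ioc] with x hx
      rw [Real.norm_eq_abs, abs_of_nonneg (hnonneg x)]
      exact sub_le_sub (hVmono (by linarith [hx.2])) (hVmono hx.1.le)
    have heq : ∫⁻ x in Ioc a b, g x = ENNReal.ofReal (∫ x in Ioc a b, (V (x + t) - V x)) :=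
      (ofReal_integral_eq_lintegral_ofReal hint
        (Filter.Eventually.of_forall fun x => hnonneg x)).symm
    rw [heq]
    apply ENNReal.ofReal_le_ofReal
    have h1 : ∫ x in Ioc a b, (V (x + t) - V x) = ∫ x in a..b, (V (x + t) - V x) :=
      (intervalIntegral.integral_of_le hab).symm
    rw [h1, intervalIntegral.integral_sub (by simpa using (hVint (a+t) (b+t)).comp_add_right t) (hVint a b),
      intervalIntegral.integral_comp_add_right V t]
    have hA := intervalIntegral.integral_add_adjacent_intervals
      (hVint a (a + t)) (hVint (a + t) (b + t))
    have hB := intervalIntegral.integral_add_adjacent_intervals (hVint a b) (hVint b (b + t))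
    have hub : ∫ x in b..(b + t), V x ≤ t * V (b + t) := by
      have := intervalIntegral.integral_mono_on (le_add_of_nonneg_right ht)
        (hVint b (b + t)) intervalIntegrable_const (fun x hx => hVmono hx.2)
      simpa using this
    have hlb : t * V a ≤ ∫ x in a..(a + t), V x := by
      have := intervalIntegral.integral_mono_on (le_add_of_nonneg_right ht)
        intervalIntegrable_const (hVint a (a + t)) (fun x hx => hVmono hx.1)
      simpa using this
    have hvt : V (b + t) - V a ≤ T := hVT a (b + t) (by linarith)
    nlinarith [mul_le_mul_of_nonneg_left hvt ht]
  refine step1.trans ?_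
  have hmono : Monotone fun n : ℕ => (Ioc (-(n : ℝ)) (n : ℝ)).indicator g := by
    intro m n hmn
    apply indicator_le_indicator_of_subset
    · exact Ioc_subset_Ioc (neg_le_neg (Nat.cast_le.2 hmn)) (Nat.cast_le.2 hmn)
    · exact fun x => zero_le
  have hsup : (fun x => g x) = fun x => ⨆ n : ℕ, (Ioc (-(n : ℝ)) (n : ℝ)).indicator g x := by
    funext x
    refine le_antisymm ?_ (iSup_le fun n => indicator_le_self _ _ x)
    obtain ⟨n, hn⟩ := exists_nat_gt |x|
    refine le_trans ?_ (le_iSup _ n)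
    rw [indicator_of_mem]
    constructor
    · have := abs_lt.mp hn
      linarith [this.1]
    · exact (le_abs_self x).trans hn.le
  calc ∫⁻ x, g x = ∫⁻ x, ⨆ n : ℕ, (Ioc (-(n : ℝ)) (n : ℝ)).indicator g x := by rw [← hsup]
    _ = ⨆ n : ℕ, ∫⁻ x, (Ioc (-(n : ℝ)) (n : ℝ)).indicator g x :=
        lintegral_iSup (fun n => hgmeas.indicator measurableSet_Ioc) hmono
    _ ≤ ENNReal.ofReal (t * T) := by
        refine iSup_le fun n => ?_
        rw [lintegral_indicator measurableSet_Ioc g]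
        exact key _ _ ((neg_nonpos.mpr (Nat.cast_nonneg n)).trans (Nat.cast_nonneg n))

private lemma kernel_lintegral_eq {ε : ℝ} (hε : 0 < ε) (c : ℝ) (hc : 0 ≤ c) :
    ∫⁻ t in Ioi (0 : ℝ),
        ENNReal.ofReal (ε⁻¹ * Real.exp (-(t / ε))) * ENNReal.ofReal (t * c)
      = ENNReal.ofReal (ε * c) := by
  have hbase : IntegrableOn (fun t : ℝ => t * Real.exp (-(ε⁻¹ * t))) (Ioi 0) := by
    refine integrable_of_isBigO_exp_neg (b := ε⁻¹ / 2) (by positivity)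
      (Continuous.continuousOn (by continuity)) ?_
    have h1 : Filter.Tendsto (fun u : ℝ => u * Real.exp (-u)) Filter.atTop (nhds 0) := by
      simpa using Real.tendsto_pow_mul_exp_neg_atTop_nhds_zero 1
    have h2 : Filter.Tendsto (fun t : ℝ => (ε⁻¹ / 2) * t) Filter.atTop Filter.atTop :=
      Filter.tendsto_id.const_mul_atTop (by positivity)
    have h3 : Filter.Tendsto (fun t : ℝ => ((ε⁻¹ / 2) * t) * Real.exp (-((ε⁻¹ / 2) * t)))
        Filter.atTop (nhds 0) := h1.comp h2
    have h4 : Filter.Tendsto (fun t : ℝ => t * Real.exp (-((ε⁻¹ / 2) * t)))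
        Filter.atTop (nhds ((ε⁻¹ / 2)⁻¹ * 0)) := by
      refine (h3.const_mul ((ε⁻¹ / 2)⁻¹)).congr fun t => ?_
      field_simp
    rw [mul_zero] at h4
    have h5 : (fun t : ℝ => t * Real.exp (-(ε⁻¹ * t)))
        = fun t : ℝ => (t * Real.exp (-((ε⁻¹ / 2) * t))) * Real.exp (-(ε⁻¹ / 2) * t) := by
      funext t
      rw [mul_assoc, ← Real.exp_add]
      ring_nf
    rw [h5]
    simpa using (h4.isBigO_one ℝ).mul
      (Asymptotics.isBigO_refl (fun t : ℝ => Real.exp (-(ε⁻¹ / 2) * t)) Filter.atTop)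
  have hval : ∫ t in Ioi (0 : ℝ), t * Real.exp (-(ε⁻¹ * t)) = ε ^ 2 := by
    have := Real.integral_rpow_mul_exp_neg_mul_Ioi (a := 2) (r := ε⁻¹) (by norm_num) (by positivity)
    simp only [show (2 : ℝ) - 1 = 1 by norm_num, Real.rpow_one] at this
    rw [this, Real.Gamma_two, mul_one, one_div, inv_inv,
      show (2 : ℝ) = ((2 : ℕ) : ℝ) by norm_num, Real.rpow_natCast]
  have hpt : ∀ t : ℝ,
      ENNReal.ofReal (ε⁻¹ * Real.exp (-(t / ε))) * ENNReal.ofReal (t * c)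
        = ENNReal.ofReal ((ε⁻¹ * c) * (t * Real.exp (-(ε⁻¹ * t)))) := by
    intro t
    rw [← ENNReal.ofReal_mul (by positivity)]
    congr 1
    rw [show -(t / ε) = -(ε⁻¹ * t) by ring]
    ring
  calc ∫⁻ t in Ioi (0 : ℝ),
        ENNReal.ofReal (ε⁻¹ * Real.exp (-(t / ε))) * ENNReal.ofReal (t * c)
      = ∫⁻ t in Ioi (0 : ℝ),
          ENNReal.ofReal ((ε⁻¹ * c) * (t * Real.exp (-(ε⁻¹ * t)))) := by
        exact lintegral_congr fun t => hpt t
    _ = ENNReal.ofReal (∫ t in Ioi (0 : ℝ), (ε⁻¹ * c) * (t * Real.exp (-(ε⁻¹ * t)))) := by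
        refine (ofReal_integral_eq_lintegral_ofReal (hbase.const_mul _) ?_).symm
        filter_upwards [ae_restrict_mem measurableSet_Ioi] with t (htt : (0:ℝ) < t)
        positivity
    _ = ENNReal.ofReal (ε * c) := by
        rw [integral_const_mul, hval]
        congr 1
        field_simp

private lemma pointwise_bound {f : ℝ → ℝ} (hf : Integrable f) {ε : ℝ} (hε : 0 < ε) (x : ℝ) :
    (‖(∫ y in Ioi x, ε⁻¹ * Real.exp ((x - y) / ε) * f y) - f x‖₊ : ℝ≥0∞) ≤
      ∫⁻ t in Ioi (0 : ℝ),
        ENNReal.ofReal (ε⁻¹ * Real.exp (-(t / ε))) * (‖f (x + t) - f x‖₊ : ℝ≥0∞) := by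
  have hε' : (0 : ℝ) < ε⁻¹ := inv_pos.2 hε
  set k : ℝ → ℝ := fun y => ε⁻¹ * Real.exp ((x - y) / ε) with hk
  have hknn : ∀ y, 0 ≤ k y := fun y => by simp only [hk]; positivity
  have hkeq : k = fun y => (ε⁻¹ * Real.exp (x / ε)) * Real.exp (-ε⁻¹ * y) := by
    funext y
    simp only [hk]
    have h : (x - y) / ε = x / ε + -ε⁻¹ * y := by field_simp; ring
    rw [h, Real.exp_add, ← mul_assoc]
  have hk_int : IntegrableOn k (Ioi x) := by
    rw [hkeq]
    exact (exp_neg_integrableOn_Ioi x hε').const_mul _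
  have hkt : ∀ t : ℝ, k (t + x) = ε⁻¹ * Real.exp (-(t / ε)) := by
    intro t
    simp only [hk]
    have h : (x - (t + x)) / ε = -(t / ε) := by ring
    rw [h]
  have hpre : (fun t : ℝ => t + x) ⁻¹' Ioi x = Ioi (0 : ℝ) := by
    ext t
    simp [mem_Ioi]
  have hker : ∫ y in Ioi x, k y = 1 := by
    have htrans := (measurePreserving_add_right (volume : Measure ℝ) x).setIntegral_preimage_emb
      (measurableEmbedding_addRight x) k (Ioi x)
    rw [← htrans, hpre]
    have h1 : ∀ t ∈ Ioi (0 : ℝ), k (t + x) = ε⁻¹ * Real.exp (-(ε⁻¹ * t)) := by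
      intro t _
      rw [hkt t]
      congr 1
      ring
    rw [setIntegral_congr_fun measurableSet_Ioi h1, integral_const_mul]
    have h2 := integral_comp_mul_left_Ioi (fun u => Real.exp (-u)) 0 hε'
    simp only [mul_zero] at h2
    rw [h2, integral_exp_neg_Ioi]
    simp [smul_eq_mul]
    field_simp
  have hkf : IntegrableOn (fun y => k y * f y) (Ioi x) := by
    have hkm : Measurable k := by
      rw [hkeq]
      fun_prop
    refine Integrable.mono' ((hf.abs.const_mul ε⁻¹).integrableOn)
      ((hkm.aestronglyMeasurable.restrict).mul hf.aestronglyMeasurable.restrict) ?_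
    filter_upwards [ae_restrict_mem measurableSet_Ioi] with y (hy : x < y)
    rw [Real.norm_eq_abs, abs_mul, abs_of_nonneg (hknn y)]
    have hky : k y ≤ ε⁻¹ := by
      simp only [hk]
      have h1 : Real.exp ((x - y) / ε) ≤ 1 :=
        Real.exp_le_one_iff.2 (div_nonpos_of_nonpos_of_nonneg (by linarith) hε.le)
      nlinarith
    exact mul_le_mul_of_nonneg_right hky (abs_nonneg _)
  have hsub : (∫ y in Ioi x, ε⁻¹ * Real.exp ((x - y) / ε) * f y) - f x
      = ∫ y in Ioi x, k y * (f y - f x) := by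
    have h1 : (fun y => k y * (f y - f x)) = fun y => k y * f y - k y * f x := by
      funext y; ring
    rw [h1, integral_sub hkf (hk_int.mul_const (f x)), integral_mul_const, hker, one_mul]
  rw [hsub]
  calc (‖∫ y in Ioi x, k y * (f y - f x)‖₊ : ℝ≥0∞)
      ≤ ∫⁻ y in Ioi x, (‖k y * (f y - f x)‖₊ : ℝ≥0∞) :=
        enorm_integral_le_lintegral_enorm _
    _ = ∫⁻ y in Ioi x, ENNReal.ofReal (k y) * (‖f y - f x‖₊ : ℝ≥0∞) := by
        refine lintegral_congr fun y => ?_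
        rw [← enorm_eq_nnnorm, Real.enorm_eq_ofReal_abs, abs_mul, abs_of_nonneg (hknn y),
          ENNReal.ofReal_mul (hknn y), ← enorm_eq_nnnorm, Real.enorm_eq_ofReal_abs]
    _ = ∫⁻ t in Ioi (0 : ℝ),
          ENNReal.ofReal (k (t + x)) * (‖f (t + x) - f x‖₊ : ℝ≥0∞) := by
        rw [← (measurePreserving_add_right (volume : Measure ℝ) x).setLIntegral_comp_preimage_emb
          (measurableEmbedding_addRight x)
          (fun y => ENNReal.ofReal (k y) * (‖f y - f x‖₊ : ℝ≥0∞)) (Ioi x), hpre]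
    _ = ∫⁻ t in Ioi (0 : ℝ),
          ENNReal.ofReal (ε⁻¹ * Real.exp (-(t / ε))) * (‖f (x + t) - f x‖₊ : ℝ≥0∞) := by
        refine lintegral_congr fun t => ?_
        rw [hkt t, add_comm t x]

/-- For an integrable function `f` of bounded total variation,
`∫ |q_ε[f] - f| ≤ ε · TV(f)`, where `q_ε[f](x) = ∫_x^∞ ε⁻¹ e^((x-y)/ε) f(y) dy`. -/
theorem exp_average_L1_error
    (f : ℝ → ℝ) (hf : Integrable f)
    (hTV : eVariationOn f univ ≠ ⊤)
    (ε : ℝ) (hε : 0 < ε)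
    (q : ℝ → ℝ)
    (hq : ∀ x, q x = ∫ y in Ioi x, ε⁻¹ * Real.exp ((x - y) / ε) * f y) :
    ∫ x : ℝ, |q x - f x| ≤ ε * (eVariationOn f univ).toReal := by
  have hf1 := hf.aestronglyMeasurable
  set f' : ℝ → ℝ := hf1.mk f with hf'def
  have hf'meas : Measurable f' := hf1.stronglyMeasurable_mk.measurable
  have hff' : f =ᵐ[volume] f' := hf1.ae_eq_mk
  set T : ℝ := (eVariationOn f univ).toReal with hTdef
  have hT0 : 0 ≤ T := ENNReal.toReal_nonneg
  -- measurability of q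
  have hqsm : AEStronglyMeasurable q (volume : Measure ℝ) := by
    set F : ℝ × ℝ → ℝ := fun p =>
      ({p : ℝ × ℝ | p.1 < p.2}).indicator
        (fun p : ℝ × ℝ => ε⁻¹ * Real.exp ((p.1 - p.2) / ε) * f' p.2) p with hF
    have hFm : StronglyMeasurable F := by
      apply Measurable.stronglyMeasurable
      apply Measurable.indicator
      · fun_prop
      · exact measurableSet_lt measurable_fst measurable_snd
    have hq2 : q = fun x => ∫ y, F (x, y) := by
      funext x
      rw [hq x]
      have h1 : ∫ y in Ioi x, ε⁻¹ * Real.exp ((x - y) / ε) * f y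
          = ∫ y in Ioi x, ε⁻¹ * Real.exp ((x - y) / ε) * f' y := by
        refine integral_congr_ae ?_
        filter_upwards [ae_restrict_of_ae hff'] with y hy
        rw [hy]
      rw [h1, ← integral_indicator measurableSet_Ioi]
      refine integral_congr_ae (Filter.Eventually.of_forall fun y => ?_)
      by_cases hxy : x < y
      · simp [hF, indicator_of_mem, hxy, mem_Ioi]
      · simp [hF, indicator_of_notMem, hxy, mem_Ioi]
    rw [hq2]
    exact hFm.integral_prod_right'.aestronglyMeasurable
  set K : ℝ → ℝ≥0∞ := fun t => ENNReal.ofReal (ε⁻¹ * Real.exp (-(t / ε))) with hK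
  have hL : ∫⁻ x : ℝ, (‖q x - f x‖₊ : ℝ≥0∞) ≤ ENNReal.ofReal (ε * T) := by
    have h0 : ∫⁻ x : ℝ, (‖q x - f x‖₊ : ℝ≥0∞)
        ≤ ∫⁻ x : ℝ, ∫⁻ t in Ioi (0 : ℝ), K t * (‖f (x + t) - f x‖₊ : ℝ≥0∞) := by
      refine lintegral_mono fun x => ?_
      rw [hq x]
      exact pointwise_bound hf hε x
    have h1 : ∫⁻ x : ℝ, ∫⁻ t in Ioi (0 : ℝ), K t * (‖f (x + t) - f x‖₊ : ℝ≥0∞)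
        = ∫⁻ x : ℝ, ∫⁻ t in Ioi (0 : ℝ), K t * (‖f' (x + t) - f' x‖₊ : ℝ≥0∞) := by
      refine lintegral_congr_ae ?_
      filter_upwards [hff'] with x hx
      refine lintegral_congr_ae ?_
      have hshift : (fun t : ℝ => f (x + t)) =ᵐ[volume] fun t : ℝ => f' (x + t) :=
        (measurePreserving_add_left (volume : Measure ℝ) x).quasiMeasurePreserving.ae_eq hff'
      filter_upwards [ae_restrict_of_ae hshift] with t htt
      rw [htt, hx]
    have h2 : ∫⁻ x : ℝ, ∫⁻ t in Ioi (0 : ℝ), K t * (‖f' (x + t) - f' x‖₊ : ℝ≥0∞)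
        = ∫⁻ t in Ioi (0 : ℝ), ∫⁻ x : ℝ, K t * (‖f' (x + t) - f' x‖₊ : ℝ≥0∞) := by
      refine lintegral_lintegral_swap (Measurable.aemeasurable ?_)
      show Measurable (fun p : ℝ × ℝ => K p.2 * (‖f' (p.1 + p.2) - f' p.1‖₊ : ℝ≥0∞))
      refine Measurable.mul (f := fun p : ℝ × ℝ => K p.2)
        (g := fun p : ℝ × ℝ => (‖f' (p.1 + p.2) - f' p.1‖₊ : ℝ≥0∞)) ?_ ?_
      · exact (measurable_const.mul ((measurable_snd.div_const ε).neg.exp)).ennreal_ofReal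
      · exact ((hf'meas.comp (measurable_fst.add measurable_snd)).sub
          (hf'meas.comp measurable_fst)).nnnorm.coe_nnreal_ennreal
    have h3 : ∫⁻ t in Ioi (0 : ℝ), ∫⁻ x : ℝ, K t * (‖f' (x + t) - f' x‖₊ : ℝ≥0∞)
        = ∫⁻ t in Ioi (0 : ℝ), ∫⁻ x : ℝ, K t * (‖f (x + t) - f x‖₊ : ℝ≥0∞) := by
      refine lintegral_congr fun t => ?_
      refine lintegral_congr_ae ?_
      have hshift : (fun x : ℝ => f (x + t)) =ᵐ[volume] fun x : ℝ => f' (x + t) :=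
        (measurePreserving_add_right (volume : Measure ℝ) t).quasiMeasurePreserving.ae_eq hff'
      filter_upwards [hshift, hff'] with x hx1 hx2
      rw [hx1, hx2]
    have h4 : ∫⁻ t in Ioi (0 : ℝ), ∫⁻ x : ℝ, K t * (‖f (x + t) - f x‖₊ : ℝ≥0∞)
        ≤ ∫⁻ t in Ioi (0 : ℝ), K t * ENNReal.ofReal (t * T) := by
      refine lintegral_mono_ae ?_
      filter_upwards [ae_restrict_mem measurableSet_Ioi] with t (htt : (0 : ℝ) < t)
      rw [lintegral_const_mul' _ _ ENNReal.ofReal_ne_top]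
      exact mul_le_mul_right (translate_lintegral_le f hTV htt.le) _
    calc ∫⁻ x : ℝ, (‖q x - f x‖₊ : ℝ≥0∞)
        ≤ ∫⁻ t in Ioi (0 : ℝ), K t * ENNReal.ofReal (t * T) :=
          h0.trans (le_of_eq (h1.trans (h2.trans h3))) |>.trans h4
      _ = ENNReal.ofReal (ε * T) := kernel_lintegral_eq hε T hT0
  have hnn : 0 ≤ᵐ[volume] fun x : ℝ => |q x - f x| :=
    Filter.Eventually.of_forall fun x => abs_nonneg _
  have habs : AEStronglyMeasurable (fun x : ℝ => |q x - f x|) volume := by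
    have h := (hqsm.sub hf1).norm
    simpa only [Real.norm_eq_abs, Pi.sub_apply] using h
  rw [integral_eq_lintegral_of_nonneg_ae hnn habs]
  have hre : ∫⁻ x : ℝ, ENNReal.ofReal |q x - f x| = ∫⁻ x : ℝ, (‖q x - f x‖₊ : ℝ≥0∞) :=
    lintegral_congr fun x => (Real.enorm_eq_ofReal_abs _).symm
  rw [hre]
  refine le_trans (ENNReal.toReal_mono ENNReal.ofReal_ne_top hL) ?_
  rw [ENNReal.toReal_ofReal (mul_nonneg hε.le hT0)]
end

section
/- Let f : ℝ → ℝ be bounded and measurable with bounded total variation TV(f). Then for every ε > 0, the exponentially weighted average q_ε[f](x) = ∫_x^∞ ε^{-1} e^{(x−y)/ε} f(y) dy has total variation at most that of f: TV(q_ε[f]) ≤ TV(f). -/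
open MeasureTheory Set

set_option maxHeartbeats 1000000

/-- The exponentially weighted average does not increase the total variation:
`TV(q_ε[f]) ≤ TV(f)`. -/
theorem exp_average_variation_le
    (f : ℝ → ℝ) (hfm : Measurable f) (hfb : ∃ M : ℝ, ∀ x, |f x| ≤ M)
    (hTV : eVariationOn f univ ≠ ⊤)
    (ε : ℝ) (hε : 0 < ε)
    (q : ℝ → ℝ)
    (hq : ∀ x, q x = ∫ y in Ioi x, ε⁻¹ * Real.exp ((x - y) / ε) * f y) :
    eVariationOn q univ ≤ eVariationOn f univ := by
  obtain ⟨M, hM⟩ := hfb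
  set w : ℝ → ℝ := fun t => ε⁻¹ * Real.exp (-(ε⁻¹ * t)) with hw_def
  have hw_nonneg : ∀ t, 0 ≤ w t := fun t =>
    mul_nonneg (inv_nonneg.mpr hε.le) (Real.exp_pos _).le
  have hw_int : IntegrableOn w (Ioi (0:ℝ)) := by
    have h := (exp_neg_integrableOn_Ioi 0 (inv_pos.mpr hε)).const_mul ε⁻¹
    simpa only [hw_def, neg_mul, IntegrableOn] using h
  have hw_meas : Measurable w :=
    (measurable_const.mul ((measurable_const.mul measurable_id).neg.exp))
  -- total mass 1
  have hw_total : ∫ t in Ioi (0:ℝ), w t = 1 := by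
    have h1 : ∫ t in Ioi (0:ℝ), Real.exp (-(ε⁻¹ * t)) = ε := by
      have := integral_comp_mul_left_Ioi (g := fun s => Real.exp (-s)) 0 (inv_pos.mpr hε)
      simp only [mul_zero, smul_eq_mul, inv_inv] at this
      rw [this, integral_exp_neg_Ioi_zero, mul_one]
    rw [hw_def]
    simp only [integral_const_mul, h1]
    field_simp
  -- change of variables
  have hq' : ∀ x, q x = ∫ t in Ioi (0:ℝ), w t * f (x + t) := by
    intro x
    rw [hq x]
    have h1 : (∫ y in Ioi x, ε⁻¹ * Real.exp ((x - y) / ε) * f y)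
        = ∫ y, (Ioi x).indicator (fun y => ε⁻¹ * Real.exp ((x - y) / ε) * f y) y := by
      rw [integral_indicator measurableSet_Ioi]
    have h2 : (∫ t in Ioi (0:ℝ), w t * f (x + t))
        = ∫ t, (Ioi (0:ℝ)).indicator (fun t => w t * f (x + t)) t := by
      rw [integral_indicator measurableSet_Ioi]
    rw [h1, h2,
      ← integral_add_right_eq_self
        ((Ioi x).indicator (fun y => ε⁻¹ * Real.exp ((x - y) / ε) * f y)) x]
    congr 1
    ext t
    by_cases ht : t ∈ Ioi (0:ℝ)
    · have htx : t + x ∈ Ioi x := by simpa using ht.out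
      rw [indicator_of_mem htx, indicator_of_mem ht]
      have : (x - (t + x)) / ε = -(ε⁻¹ * t) := by field_simp; ring
      rw [this, add_comm x t]
    · have htx : t + x ∉ Ioi x := by simpa using not_lt.mp (by simpa using ht)
      rw [indicator_of_notMem htx, indicator_of_notMem ht]
  -- integrability of w * f(x + ·)
  have hint : ∀ x : ℝ, IntegrableOn (fun t => w t * f (x + t)) (Ioi (0:ℝ)) := by
    intro x
    have h : IntegrableOn (fun t => f (x + t) * w t) (Ioi (0:ℝ)) := by
      refine Integrable.bdd_mul (c := M) hw_int
        (((hfm.comp (measurable_const.add measurable_id)).aestronglyMeasurable).restrict) ?_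
      filter_upwards with t
      simpa using hM (x + t)
    exact h.congr (Filter.Eventually.of_forall fun t => mul_comm _ _)
  -- key bound on |q a - q b|
  set V : ℝ := (eVariationOn f univ).toReal with hV_def
  have hM0 : 0 ≤ M := le_trans (abs_nonneg _) (hM 0)
  -- the partition sup
  rw [eVariationOn]
  refine iSup_le ?_
  rintro ⟨n, u, hu, -⟩
  simp only
  -- pointwise sum bound
  have hstep : ∀ t : ℝ,
      ∑ i ∈ Finset.range n, |f (u (i+1) + t) - f (u i + t)| ≤ V := by
    intro t
    have hmono : Monotone (fun i => u i + t) := fun i j hij => by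
      simpa using hu hij
    have hsum := eVariationOn.sum_le (f := f) (n := n) hmono (fun i => mem_univ _)
    have : ENNReal.ofReal (∑ i ∈ Finset.range n, |f (u (i+1) + t) - f (u i + t)|)
        ≤ eVariationOn f univ := by
      rw [ENNReal.ofReal_sum_of_nonneg (fun i _ => abs_nonneg _)]
      refine le_trans (le_of_eq ?_) hsum
      refine Finset.sum_congr rfl fun i _ => ?_
      rw [edist_dist, Real.dist_eq]
    exact (ENNReal.ofReal_le_iff_le_toReal hTV).mp this
  -- bound each term
  have hterm : ∀ i : ℕ,
      edist (q (u (i+1))) (q (u i))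
        ≤ ENNReal.ofReal (∫ t in Ioi (0:ℝ), w t * |f (u (i+1) + t) - f (u i + t)|) := by
    intro i
    rw [edist_dist, Real.dist_eq]
    apply ENNReal.ofReal_le_ofReal
    rw [hq' (u (i+1)), hq' (u i), ← integral_sub (hint _) (hint _)]
    calc |∫ t in Ioi (0:ℝ), (w t * f (u (i+1) + t) - w t * f (u i + t))|
        ≤ ∫ t in Ioi (0:ℝ), |w t * f (u (i+1) + t) - w t * f (u i + t)| := by
          simpa [Real.norm_eq_abs] using norm_integral_le_integral_norm
            (μ := volume.restrict (Ioi (0:ℝ)))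
            (fun t => w t * f (u (i+1) + t) - w t * f (u i + t))
      _ = ∫ t in Ioi (0:ℝ), w t * |f (u (i+1) + t) - f (u i + t)| := by
          refine integral_congr_ae (Filter.Eventually.of_forall fun t => ?_)
          dsimp only
          rw [← mul_sub, abs_mul, abs_of_nonneg (hw_nonneg t)]
  -- integrability of the abs integrands
  have hint2 : ∀ i : ℕ,
      IntegrableOn (fun t => w t * |f (u (i+1) + t) - f (u i + t)|) (Ioi (0:ℝ)) := by
    intro i
    have h : IntegrableOn (fun t => |f (u (i+1) + t) - f (u i + t)| * w t) (Ioi (0:ℝ)) := by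
      refine Integrable.bdd_mul (c := 2*M) hw_int
        (Measurable.aestronglyMeasurable ?_).restrict ?_
      · exact (((hfm.comp (measurable_const.add measurable_id))).sub
          ((hfm.comp (measurable_const.add measurable_id)))).abs
      · filter_upwards with t
        simp only [Real.norm_eq_abs, abs_abs]
        calc |f (u (i+1) + t) - f (u i + t)| ≤ |f (u (i+1) + t)| + |f (u i + t)| :=
              abs_sub _ _
          _ ≤ M + M := add_le_add (hM _) (hM _)
          _ = 2 * M := by ring
    exact h.congr (Filter.Eventually.of_forall fun t => mul_comm _ _)
  -- now sum up
  calc ∑ i ∈ Finset.range n, edist (q (u (i+1))) (q (u i))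
      ≤ ∑ i ∈ Finset.range n,
          ENNReal.ofReal (∫ t in Ioi (0:ℝ), w t * |f (u (i+1) + t) - f (u i + t)|) :=
        Finset.sum_le_sum fun i _ => hterm i
    _ = ENNReal.ofReal (∑ i ∈ Finset.range n,
          ∫ t in Ioi (0:ℝ), w t * |f (u (i+1) + t) - f (u i + t)|) := by
        rw [ENNReal.ofReal_sum_of_nonneg]
        intro i _
        exact integral_nonneg fun t => mul_nonneg (hw_nonneg t) (abs_nonneg _)
    _ = ENNReal.ofReal (∫ t in Ioi (0:ℝ),
          ∑ i ∈ Finset.range n, w t * |f (u (i+1) + t) - f (u i + t)|) := by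
        rw [integral_finset_sum _ (fun i _ => hint2 i)]
    _ ≤ ENNReal.ofReal (∫ t in Ioi (0:ℝ), w t * V) := by
        apply ENNReal.ofReal_le_ofReal
        apply integral_mono (integrable_finset_sum _ (fun i _ => hint2 i))
          (hw_int.mul_const V)
        intro t
        dsimp only
        rw [← Finset.mul_sum]
        exact mul_le_mul_of_nonneg_left (hstep t) (hw_nonneg t)
    _ = ENNReal.ofReal V := by
        rw [integral_mul_const, hw_total, one_mul]
    _ = eVariationOn f univ := by
        rw [hV_def, ENNReal.ofReal_toReal hTV]
end
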